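/- For every integer n ≥ 3, the (−1)-st moment of distance satisfies I(n,−1) = (n/π) · [ γ − Ci(2π/n) + log(2π/n) + ( Si(π) − Si(2π/n) ) · tan(π/n) ], where γ is the Euler–Mascheroni constant; equivalently, I(n,−1) = (n/π) · [ ∫_0^{2π/n} (1 − cos t)/t dt + ( ∫_{2π/n}^{π} (sin t)/t dt ) · tan(π/n) ]. -/

import Mathlib

open MeasureTheory

/-- The `(-1)`-st moment of distance on the homogeneous lens space `L(n;1)`,
expressed as an explicit integral over a fundamental domain in join coordinates. -/
noncomputable def momentInegOne (n : ℕ) : ℝ :=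
  ((n : ℝ) ^ 2 / (2 * Real.pi ^ 2)) *
    ∫ θ₂ in (-(Real.pi / n))..(Real.pi / n),
      ∫ θ₁ in (-(Real.pi / n))..(Real.pi / n),
        ∫ η in (0 : ℝ)..(Real.pi / 2),
          (Real.arccos (Real.cos θ₁ * Real.cos η))⁻¹ * Real.cos η * Real.sin η

/-- The sine integral `Si(x) = ∫_0^x sin t / t dt`. -/
noncomputable def Si (x : ℝ) : ℝ := ∫ t in (0 : ℝ)..x, Real.sin t / t

/-- The cosine integral `Ci(x) = γ + log x - ∫_0^x (1 - cos t)/t dt`. -/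
noncomputable def Ci (x : ℝ) : ℝ :=
  Real.eulerMascheroniConstant + Real.log x - ∫ t in (0 : ℝ)..x, (1 - Real.cos t) / t

open Real Filter Topology

noncomputable def Sfun (t : ℝ) : ℝ := if t = 0 then 1 else Real.sin t / t

lemma Sfun_ne {t : ℝ} (ht : t ≠ 0) : Sfun t = Real.sin t / t := if_neg ht

lemma continuous_Sfun : Continuous Sfun := by
  rw [continuous_iff_continuousAt]
  intro x
  rcases eq_or_ne x 0 with rfl | hx
  · have h1 : Tendsto (fun t : ℝ => Real.sin t / t) (𝓝[≠] 0) (𝓝 1) := by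
      have := (Real.hasDerivAt_sin 0)
      rw [hasDerivAt_iff_tendsto_slope] at this
      simp only [Real.cos_zero] at this
      refine this.congr (fun t => ?_)
      simp [slope_def_field, div_eq_div_iff]
    have h2 : Tendsto Sfun (𝓝[≠] 0) (𝓝 1) := by
      refine h1.congr' ?_
      filter_upwards [self_mem_nhdsWithin] with t ht
      exact (Sfun_ne ht).symm
    have h3 : Tendsto Sfun (pure (0:ℝ)) (𝓝 1) := by
      simpa [Sfun] using tendsto_pure_nhds Sfun 0
    have : Tendsto Sfun (𝓝[≠] (0:ℝ) ⊔ pure 0) (𝓝 1) := h2.sup h3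
    rw [nhdsNE_sup_pure] at this
    simpa [ContinuousAt, Sfun] using this
  · have : ContinuousAt (fun t : ℝ => Real.sin t / t) x :=
      (Real.continuous_sin.continuousAt).div continuousAt_id hx
    refine this.congr ?_
    filter_upwards [isOpen_ne.mem_nhds hx] with t ht
    exact (Sfun_ne ht).symm

noncomputable def Wfun (θ : ℝ) : ℝ := ∫ t in θ..(Real.pi/2), Real.cos t * Sfun t

lemma hasDerivAt_Wfun (θ : ℝ) : HasDerivAt Wfun (-(Real.cos θ * Sfun θ)) θ := by
  have hc : Continuous fun t => Real.cos t * Sfun t := Real.continuous_cos.mul continuous_Sfun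
  have heq : Wfun = fun θ => (∫ t in (0:ℝ)..(Real.pi/2), Real.cos t * Sfun t)
      - ∫ t in (0:ℝ)..θ, Real.cos t * Sfun t := by
    funext θ
    rw [Wfun, ← intervalIntegral.integral_add_adjacent_intervals
      (hc.intervalIntegrable θ 0) (hc.intervalIntegrable 0 (Real.pi/2)),
      intervalIntegral.integral_symm 0 θ]
    ring
  rw [heq]
  simpa using ((hc.integral_hasStrictDerivAt 0 θ).hasDerivAt).const_sub
    (∫ t in (0:ℝ)..(Real.pi/2), Real.cos t * Sfun t)




lemma continuous_Wfun : Continuous Wfun :=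
  continuous_iff_continuousAt.2 fun θ => (hasDerivAt_Wfun θ).continuousAt

lemma inner_eval {θ : ℝ} (h0 : 0 < θ) (h1 : θ < Real.pi / 2) :
    (∫ η in (0:ℝ)..(Real.pi/2),
        (Real.arccos (Real.cos θ * Real.cos η))⁻¹ * Real.cos η * Real.sin η)
      = (Real.cos θ ^ 2)⁻¹ * Wfun θ := by
  have hpi2 : (0:ℝ) ≤ Real.pi / 2 := by positivity
  have hcpos : 0 < Real.cos θ := Real.cos_pos_of_mem_Ioo ⟨by linarith [Real.pi_pos], h1⟩
  have hclt : Real.cos θ < 1 := by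
    have := Real.cos_lt_cos_of_nonneg_of_le_pi (le_refl (0:ℝ)) (by linarith [Real.pi_pos]) h0
    simpa using this
  set c := Real.cos θ with hc
  set f : ℝ → ℝ := fun η => Real.arccos (c * Real.cos η) with hf
  set f' : ℝ → ℝ := fun η => c * Real.sin η / Real.sqrt (1 - (c * Real.cos η)^2) with hf'
  set g : ℝ → ℝ := fun t => (c^2)⁻¹ * (Real.sin t * Real.cos t / t) with hg
  have harg : ∀ η ∈ Set.uIcc (0:ℝ) (Real.pi/2), 0 ≤ c * Real.cos η ∧ c * Real.cos η < 1 := by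
    intro η hη
    rw [Set.uIcc_of_le hpi2] at hη
    have h2 : 0 ≤ Real.cos η := Real.cos_nonneg_of_mem_Icc
      ⟨by linarith [hη.1, Real.pi_pos], hη.2⟩
    constructor
    · positivity
    · calc c * Real.cos η ≤ c * 1 := by nlinarith [Real.cos_le_one η]
        _ < 1 := by linarith
  have hsqrtpos : ∀ η ∈ Set.uIcc (0:ℝ) (Real.pi/2), 0 < Real.sqrt (1 - (c * Real.cos η)^2) := by
    intro η hη
    obtain ⟨ha, hb⟩ := harg η hη
    have : 0 < 1 - (c * Real.cos η)^2 := by nlinarith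
    exact Real.sqrt_pos.2 this
  have hderiv : ∀ η ∈ Set.uIcc (0:ℝ) (Real.pi/2), HasDerivAt f (f' η) η := by
    intro η hη
    obtain ⟨ha, hb⟩ := harg η hη
    have hinner : HasDerivAt (fun η => c * Real.cos η) (c * (-Real.sin η)) η :=
      (Real.hasDerivAt_cos η).const_mul c
    have harccos := Real.hasDerivAt_arccos (by linarith) (ne_of_lt hb)
    have := harccos.comp η hinner
    have hs := hsqrtpos η hη
    refine this.congr_deriv ?_
    simp only [hf']
    ring
  have hf'cont : ContinuousOn f' (Set.uIcc (0:ℝ) (Real.pi/2)) := by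
    apply ContinuousOn.div
    · exact (continuous_const.mul Real.continuous_sin).continuousOn
    · apply Real.continuous_sqrt.comp_continuousOn
      exact (continuous_const.sub ((continuous_const.mul Real.continuous_cos).pow 2)).continuousOn
    · exact fun η hη => ne_of_gt (hsqrtpos η hη)
  have himage : f '' Set.uIcc (0:ℝ) (Real.pi/2) ⊆ {t : ℝ | t ≠ 0} := by
    rintro t ⟨η, hη, rfl⟩
    have := (harg η hη).2
    exact ne_of_gt (Real.arccos_pos.2 this)
  have hgcont : ContinuousOn g (f '' Set.uIcc (0:ℝ) (Real.pi/2)) := by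
    refine ContinuousOn.mono ?_ himage
    apply ContinuousOn.mul continuousOn_const
    exact ContinuousOn.div ((Real.continuous_sin.mul Real.continuous_cos).continuousOn)
      continuousOn_id (fun t ht => ht)
  have key := intervalIntegral.integral_comp_smul_deriv' hderiv hf'cont hgcont
  have hL : (∫ η in (0:ℝ)..(Real.pi/2),
        (Real.arccos (c * Real.cos η))⁻¹ * Real.cos η * Real.sin η)
      = ∫ η in (0:ℝ)..(Real.pi/2), f' η • (g ∘ f) η := by
    apply intervalIntegral.integral_congr
    intro η hη
    obtain ⟨ha, hb⟩ := harg η hη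
    have hs := hsqrtpos η hη
    have hfpos : 0 < f η := Real.arccos_pos.2 hb
    have hsinf : Real.sin (f η) = Real.sqrt (1 - (c * Real.cos η)^2) := by
      rw [hf]; exact Real.sin_arccos _
    have hcosf : Real.cos (f η) = c * Real.cos η := Real.cos_arccos (by linarith) (le_of_lt hb)
    simp only [smul_eq_mul, Function.comp_apply, hg]
    rw [hsinf, hcosf]
    simp only [hf', hf]
    have hA : Real.arccos (c * Real.cos η) ≠ 0 := ne_of_gt (by simpa [hf] using hfpos)
    field_simp [hA, ne_of_gt hcpos, ne_of_gt hs]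
    ring
    have hs' : Real.sqrt (1 - Real.cos η ^ 2 * c ^ 2) ≠ 0 := by
      rw [show 1 - Real.cos η ^ 2 * c ^ 2 = 1 - (c * Real.cos η)^2 by ring]; exact ne_of_gt hs
    rw [mul_assoc, mul_inv_cancel₀ hs', mul_one]
  rw [hL, key]
  have hf0 : f 0 = θ := by
    simp only [hf, Real.cos_zero, mul_one, hc]
    exact Real.arccos_cos h0.le (by linarith [Real.pi_pos])
  have hfpi2 : f (Real.pi/2) = Real.pi/2 := by
    simp [hf, Real.cos_pi_div_two, Real.arccos_zero]
  rw [hf0, hfpi2, hg]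
  rw [intervalIntegral.integral_const_mul]
  congr 1
  rw [Wfun]
  apply intervalIntegral.integral_congr
  intro t ht
  rw [Set.uIcc_of_le h1.le] at ht
  have htpos : 0 < t := lt_of_lt_of_le h0 ht.1
  show Real.sin t * Real.cos t / t = Real.cos t * Sfun t
  rw [Sfun_ne (ne_of_gt htpos)]
  ring

lemma sin_Sfun_eval {a : ℝ} (ha : 0 < a) :
    (∫ θ in (0:ℝ)..a, Real.sin θ * Sfun θ)
      = 2⁻¹ * ∫ t in (0:ℝ)..(2*a), (1 - Real.cos t) / t := by
  have h2 : (2:ℝ) ≠ 0 := two_ne_zero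
  have hcv := intervalIntegral.integral_comp_mul_left
    (a := 0) (b := a) (fun t => (1 - Real.cos t) / t) h2
  rw [smul_eq_mul, mul_zero] at hcv
  rw [← hcv]
  have : ∀ x : ℝ, (1 - Real.cos (2*x)) / (2*x) = Real.sin x * Sfun x := by
    intro x
    rcases eq_or_ne x 0 with rfl | hx
    · simp
    · rw [Sfun_ne hx]
      have hid : 1 - Real.cos (2*x) = 2 * Real.sin x ^ 2 := by
        have h1 := Real.cos_two_mul x
        have h2 := Real.sin_sq_add_cos_sq x
        linarith
      rw [hid]
      field_simp
  rw [intervalIntegral.integral_congr (g := fun x => Real.sin x * Sfun x) (fun x _ => this x)]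

lemma Wfun_eval {a : ℝ} (ha : 0 < a) (ha2 : a < Real.pi/2) :
    Wfun a = 2⁻¹ * ∫ t in (2*a)..Real.pi, Real.sin t / t := by
  have h2 : (2:ℝ) ≠ 0 := two_ne_zero
  have hcv := intervalIntegral.integral_comp_mul_left
    (a := a) (b := Real.pi/2) (fun t => Real.sin t / t) h2
  rw [smul_eq_mul, show 2*(Real.pi/2) = Real.pi by ring] at hcv
  have heq : Set.EqOn (fun x => Real.cos x * Sfun x) (fun x => Real.sin (2*x) / (2*x))
      (Set.uIcc a (Real.pi/2)) := by
    intro x hx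
    rw [Set.uIcc_of_le ha2.le] at hx
    have hxpos : 0 < x := lt_of_lt_of_le ha hx.1
    show Real.cos x * Sfun x = Real.sin (2*x) / (2*x)
    rw [Sfun_ne (ne_of_gt hxpos), Real.sin_two_mul]
    field_simp
  rw [Wfun, intervalIntegral.integral_congr heq]
  simpa using hcv

lemma theta_integral {a : ℝ} (ha : 0 < a) (ha2 : a < Real.pi/2) :
    (∫ θ in (-a)..a, ∫ η in (0:ℝ)..(Real.pi/2),
        (Real.arccos (Real.cos θ * Real.cos η))⁻¹ * Real.cos η * Real.sin η)
      = (∫ t in (0:ℝ)..(2*a), (1 - Real.cos t) / t)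
        + (∫ t in (2*a)..Real.pi, Real.sin t / t) * Real.tan a := by
  set G : ℝ → ℝ := fun θ => (Real.cos θ ^ 2)⁻¹ * Wfun |θ| with hG
  have hGcont : ContinuousOn G (Set.Icc (-a) a) := by
    apply ContinuousOn.mul
    · apply ContinuousOn.inv₀
      · exact (Real.continuous_cos.pow 2).continuousOn
      · intro θ hθ
        have : 0 < Real.cos θ := Real.cos_pos_of_mem_Ioo
          ⟨by linarith [hθ.1, Real.pi_pos], by linarith [hθ.2]⟩
        positivity
    · exact (continuous_Wfun.comp continuous_abs).continuousOn
  -- step 1: a.e. congruence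
  have step1 : (∫ θ in (-a)..a, ∫ η in (0:ℝ)..(Real.pi/2),
        (Real.arccos (Real.cos θ * Real.cos η))⁻¹ * Real.cos η * Real.sin η)
      = ∫ θ in (-a)..a, G θ := by
    apply intervalIntegral.integral_congr_ae
    have hne : ∀ᵐ θ : ℝ, θ ≠ 0 := by
      have : volume ({0} : Set ℝ) = 0 := measure_singleton 0
      rw [ae_iff]
      convert this using 2
      ext x
      simp
    filter_upwards [hne] with θ hθ hmem
    rw [Set.uIoc_of_le (by linarith)] at hmem
    have habs : 0 < |θ| := abs_pos.2 hθ
    have habs2 : |θ| < Real.pi/2 := by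
      rw [abs_lt]
      constructor <;> [linarith [hmem.1]; linarith [hmem.2]]
    have hcos : Real.cos θ = Real.cos |θ| := (Real.cos_abs θ).symm
    rw [hcos]
    rw [inner_eval habs habs2]
    rw [hG]
    simp only []
    rw [← Real.cos_abs θ]
  rw [step1]
  -- step 2: evenness and reduction to [0,a]
  have hIccuIcc : Set.Icc (-a) a = Set.uIcc (-a) a := (Set.uIcc_of_le (by linarith)).symm
  have hGint : ∀ c d : ℝ, c ∈ Set.Icc (-a) a → d ∈ Set.Icc (-a) a →
      IntervalIntegrable G volume c d := by
    intro c d hc hd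
    apply ContinuousOn.intervalIntegrable
    apply hGcont.mono
    rw [hIccuIcc] at hc hd ⊢
    exact Set.uIcc_subset_uIcc hc hd
  have hmem0 : (0:ℝ) ∈ Set.Icc (-a) a := ⟨by linarith, by linarith⟩
  have hmema : a ∈ Set.Icc (-a) a := ⟨by linarith, le_refl a⟩
  have hmemna : -a ∈ Set.Icc (-a) a := ⟨le_refl _, by linarith⟩
  have heven : (∫ θ in (-a)..(0:ℝ), G θ) = ∫ θ in (0:ℝ)..a, G θ := by
    have h1 : (∫ x in (0:ℝ)..a, G (-x)) = ∫ x in (-a)..(-(0:ℝ)), G x :=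
      intervalIntegral.integral_comp_neg (fun x => G x)
    have h2 : (∫ x in (0:ℝ)..a, G (-x)) = ∫ x in (0:ℝ)..a, G x := by
      apply intervalIntegral.integral_congr
      intro x _
      show G (-x) = G x
      simp [hG, Real.cos_neg, abs_neg]
    rw [h2] at h1
    simp only [neg_zero] at h1
    exact h1.symm
  have hsplit : (∫ θ in (-a)..a, G θ) = (∫ θ in (-a)..(0:ℝ), G θ) + ∫ θ in (0:ℝ)..a, G θ :=
    (intervalIntegral.integral_add_adjacent_intervals
      (hGint _ _ hmemna hmem0) (hGint _ _ hmem0 hmema)).symm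
  rw [hsplit, heven]
  -- step 3: rewrite G on [0,a]
  have step3 : (∫ θ in (0:ℝ)..a, G θ) = ∫ θ in (0:ℝ)..a, Wfun θ * (1 / Real.cos θ ^ 2) := by
    apply intervalIntegral.integral_congr
    intro θ hθ
    rw [Set.uIcc_of_le ha.le] at hθ
    show (Real.cos θ ^ 2)⁻¹ * Wfun |θ| = Wfun θ * (1 / Real.cos θ ^ 2)
    rw [abs_of_nonneg hθ.1]
    ring
  rw [step3]
  -- step 4: integration by parts
  have hcosne : ∀ x ∈ Set.uIcc (0:ℝ) a, Real.cos x ≠ 0 := by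
    intro x hx
    rw [Set.uIcc_of_le ha.le] at hx
    exact ne_of_gt (Real.cos_pos_of_mem_Ioo
      ⟨by linarith [hx.1, Real.pi_pos], by linarith [hx.2]⟩)
  have hibp := intervalIntegral.integral_mul_deriv_eq_deriv_mul
    (u := Wfun) (v := Real.tan) (u' := fun θ => -(Real.cos θ * Sfun θ))
    (v' := fun θ => 1 / Real.cos θ ^ 2)
    (fun x _ => hasDerivAt_Wfun x)
    (fun x hx => Real.hasDerivAt_tan (hcosne x hx))
    ((Real.continuous_cos.mul continuous_Sfun).neg.intervalIntegrable 0 a)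
    (ContinuousOn.intervalIntegrable (by
      apply ContinuousOn.div continuousOn_const ((Real.continuous_cos.pow 2).continuousOn)
      intro x hx
      exact pow_ne_zero 2 (hcosne x hx)))
  rw [hibp]
  have hlast : (∫ x in (0:ℝ)..a, -(Real.cos x * Sfun x) * Real.tan x)
      = - ∫ x in (0:ℝ)..a, Real.sin x * Sfun x := by
    rw [← intervalIntegral.integral_neg]
    apply intervalIntegral.integral_congr
    intro x hx
    have hc := hcosne x hx
    show -(Real.cos x * Sfun x) * Real.tan x = -(Real.sin x * Sfun x)
    rw [Real.tan_eq_sin_div_cos]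
    field_simp
  rw [hlast, sin_Sfun_eval ha, Wfun_eval ha ha2]
  rw [Real.tan_zero]
  ring

lemma ae_ne_zero : ∀ᵐ t : ℝ, t ≠ 0 := by
  have h : volume ({0} : Set ℝ) = 0 := measure_singleton 0
  rw [ae_iff]
  convert h using 2
  ext x
  simp

lemma intervalIntegrable_sin_div (a b : ℝ) :
    IntervalIntegrable (fun t => Real.sin t / t) volume a b := by
  have hae : Sfun =ᵐ[volume] (fun t => Real.sin t / t) := by
    filter_upwards [ae_ne_zero] with t ht
    exact Sfun_ne ht
  have h : IntervalIntegrable Sfun volume a b := continuous_Sfun.intervalIntegrable a b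
  rw [intervalIntegrable_iff] at h ⊢
  exact h.congr (ae_restrict_of_ae hae)

theorem neg_one_moment (n : ℕ) (hn : 3 ≤ n) :
    momentInegOne n =
        ((n : ℝ) / Real.pi) *
          ( Real.eulerMascheroniConstant - Ci (2 * Real.pi / n) + Real.log (2 * Real.pi / n)
            + (Si Real.pi - Si (2 * Real.pi / n)) * Real.tan (Real.pi / n) ) ∧
      momentInegOne n =
        ((n : ℝ) / Real.pi) *
          ( (∫ t in (0 : ℝ)..(2 * Real.pi / n), (1 - Real.cos t) / t)
            + (∫ t in (2 * Real.pi / n)..Real.pi, Real.sin t / t) * Real.tan (Real.pi / n) ) := by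
  have hn3 : (3:ℝ) ≤ (n:ℝ) := by exact_mod_cast hn
  have hn0 : (n:ℝ) ≠ 0 := by linarith
  have hπ := Real.pi_pos
  have ha : 0 < Real.pi / n := by positivity
  have ha2 : Real.pi / n < Real.pi / 2 := by
    apply div_lt_div_of_pos_left hπ (by norm_num)
    linarith
  have key := theta_integral ha ha2
  rw [show 2 * (Real.pi / (n:ℝ)) = 2 * Real.pi / n by ring] at key
  have hmom : momentInegOne n =
      ((n : ℝ) / Real.pi) *
        ( (∫ t in (0 : ℝ)..(2 * Real.pi / n), (1 - Real.cos t) / t)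
          + (∫ t in (2 * Real.pi / n)..Real.pi, Real.sin t / t) * Real.tan (Real.pi / n) ) := by
    rw [momentInegOne, intervalIntegral.integral_const, smul_eq_mul, key]
    field_simp
    ring
  refine ⟨?_, hmom⟩
  rw [hmom]
  congr 1
  have hCi : Real.eulerMascheroniConstant - Ci (2 * Real.pi / n) + Real.log (2 * Real.pi / n)
      = ∫ t in (0 : ℝ)..(2 * Real.pi / n), (1 - Real.cos t) / t := by
    rw [Ci]; ring
  have hSi : Si Real.pi - Si (2 * Real.pi / n)
      = ∫ t in (2 * Real.pi / n)..Real.pi, Real.sin t / t := by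
    rw [Si, Si, ← intervalIntegral.integral_add_adjacent_intervals
      (intervalIntegrable_sin_div 0 (2 * Real.pi / n))
      (intervalIntegrable_sin_div (2 * Real.pi / n) Real.pi)]
    ring
  rw [hCi, hSi]
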